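/- If u ≤ w in the right weak Bruhat order on S_n, then for every segment [i,j] ⊆ [n], the standardization of the restricted subword u_{[i,j]} is ≤ the standardization of w_{[i,j]} in the right weak Bruhat order on S_{j-i+1}. -/

import Mathlib

/-- `u` is the one-line word of a permutation of `{1, …, n}`. -/
def IsPermWord (n : ℕ) (u : List ℕ) : Prop := u.Perm (List.range' 1 n)

/-- The left inversion set of a word `u`:
pairs `(i, j)` of letters of `u` with `i < j` such that `j` occurs before `i` in `u`
(i.e. `u⁻¹(i) > u⁻¹(j)`). -/
def InvW (u : List ℕ) : Set (ℕ × ℕ) :=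
  {p | p.1 < p.2 ∧ p.1 ∈ u ∧ p.2 ∈ u ∧ u.idxOf p.2 < u.idxOf p.1}

/-- The left descent set of a word: letters `i` such that `i + 1` occurs before `i`. -/
def DesLW (u : List ℕ) : Set ℕ :=
  {i | i ∈ u ∧ i + 1 ∈ u ∧ u.idxOf (i + 1) < u.idxOf i}

/-- The covering relation of the right weak Bruhat order on one-line words:
`w = u · sᵢ` where the letters in positions `i, i+1` of `u` are increasing. -/
def WeakCovW (u w : List ℕ) : Prop :=
  ∃ (l₁ l₂ : List ℕ) (x y : ℕ), x < y ∧ u = l₁ ++ x :: y :: l₂ ∧ w = l₁ ++ y :: x :: l₂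

/-- Standardization of the subword of `u` on the letters in the segment `[i, j]`:
keep the letters lying in `[i, j]` and subtract `i - 1` from each. -/
def stW (u : List ℕ) (i j : ℕ) : List ℕ :=
  (u.filter (fun v => decide (i ≤ v ∧ v ≤ j))).map (fun v => v - (i - 1))

lemma indexOf_map_inj (f : ℕ → ℕ) (l : List ℕ) (x : ℕ)
    (hinj : ∀ a ∈ l, f a = f x → a = x) :
    (l.map f).idxOf (f x) = l.idxOf x := by
  induction l with
  | nil => simp
  | cons a t ih =>
    simp only [List.map_cons, List.idxOf_cons]
    by_cases h : a = x
    · subst h; simp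
    · have hfa : (f a == f x) = false := beq_eq_false_iff_ne.mpr
        (fun hf => h (hinj a (by simp) hf))
      have ha : (a == x) = false := beq_eq_false_iff_ne.mpr h
      simp [hfa, ha, ih (fun b hb hb' => hinj b (by simp [hb]) hb')]

lemma indexOf_filter_lt (p : ℕ → Bool) (l : List ℕ) (hl : l.Nodup) (x y : ℕ)
    (hx : x ∈ l.filter p) (hy : y ∈ l.filter p) :
    (l.filter p).idxOf x < (l.filter p).idxOf y ↔ l.idxOf x < l.idxOf y := by
  induction l with
  | nil => simp at hx
  | cons a t ih =>
    have hat : a ∉ t := (List.nodup_cons.mp hl).1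
    have ht : t.Nodup := (List.nodup_cons.mp hl).2
    by_cases hpa : p a
    · rw [List.filter_cons_of_pos hpa] at hx hy ⊢
      by_cases hxa : x = a
      · by_cases hya : y = a
        · subst hxa; subst hya; simp
        · have h1 : (a == y) = false := beq_eq_false_iff_ne.mpr (fun h => hya h.symm)
          subst hxa
          simp [List.idxOf_cons, h1]
      · by_cases hya : y = a
        · have h1 : (a == x) = false := beq_eq_false_iff_ne.mpr (fun h => hxa h.symm)
          subst hya
          simp [List.idxOf_cons, h1]
        · have h1 : (a == x) = false := beq_eq_false_iff_ne.mpr (fun h => hxa h.symm)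
          have h2 : (a == y) = false := beq_eq_false_iff_ne.mpr (fun h => hya h.symm)
          have hx' : x ∈ t.filter p := by
            rcases List.mem_cons.mp hx with h | h; exact absurd h hxa; exact h
          have hy' : y ∈ t.filter p := by
            rcases List.mem_cons.mp hy with h | h; exact absurd h hya; exact h
          simp [List.idxOf_cons, h1, h2, ih ht hx' hy']
    · rw [List.filter_cons_of_neg hpa] at hx hy ⊢
      have hxa : x ≠ a := fun h => hpa (h ▸ (List.mem_filter.mp hx).2)
      have hya : y ≠ a := fun h => hpa (h ▸ (List.mem_filter.mp hy).2)
      have h1 : (a == x) = false := beq_eq_false_iff_ne.mpr (fun h => hxa h.symm)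
      have h2 : (a == y) = false := beq_eq_false_iff_ne.mpr (fun h => hya h.symm)
      simp [List.idxOf_cons, h1, h2, ih ht hx hy]

lemma key (u : List ℕ) (hnd : u.Nodup) (i j : ℕ) (hi : 1 ≤ i) (a b : ℕ)
    (hab : (a, b) ∈ InvW (stW u i j)) :
    ∃ va vb : ℕ, va - (i-1) = a ∧ vb - (i-1) = b ∧ i ≤ va ∧ va ≤ j ∧ i ≤ vb ∧ vb ≤ j
      ∧ (va, vb) ∈ InvW u := by
  obtain ⟨h1, h2, h3, h4⟩ := hab
  simp only [stW, List.mem_map] at h2 h3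
  obtain ⟨va, hva, hfa⟩ := h2
  obtain ⟨vb, hvb, hfb⟩ := h3
  have hva' := List.mem_filter.mp hva
  have hvb' := List.mem_filter.mp hvb
  have hba : i ≤ va ∧ va ≤ j := by simpa using hva'.2
  have hbb : i ≤ vb ∧ vb ≤ j := by simpa using hvb'.2
  have hinja : ∀ c ∈ u.filter (fun v => decide (i ≤ v ∧ v ≤ j)),
      c - (i-1) = va - (i-1) → c = va := by
    intro c hc hce
    have := (List.mem_filter.mp hc).2
    simp at this
    omega
  have hinjb : ∀ c ∈ u.filter (fun v => decide (i ≤ v ∧ v ≤ j)),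
      c - (i-1) = vb - (i-1) → c = vb := by
    intro c hc hce
    have := (List.mem_filter.mp hc).2
    simp at this
    omega
  have ea : (stW u i j).idxOf a
      = (u.filter (fun v => decide (i ≤ v ∧ v ≤ j))).idxOf va := by
    rw [← hfa]; exact indexOf_map_inj _ _ _ hinja
  have eb : (stW u i j).idxOf b
      = (u.filter (fun v => decide (i ≤ v ∧ v ≤ j))).idxOf vb := by
    rw [← hfb]; exact indexOf_map_inj _ _ _ hinjb
  rw [ea, eb] at h4
  have h5 := (indexOf_filter_lt _ u hnd vb va hvb hva).mp h4
  have hmem : (va, vb) ∈ InvW u := ⟨by omega, hva'.1, hvb'.1, h5⟩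
  exact ⟨va, vb, hfa, hfb, hba.1, hba.2, hbb.1, hbb.2, hmem⟩


/-- If `u ≤ w` in the right weak Bruhat order on `Sₙ` (characterized by
containment of left inversion sets), then for every segment `[i, j] ⊆ [n]`,
`st(u_{[i,j]}) ≤ st(w_{[i,j]})` in the right weak Bruhat order on `S_{j-i+1}`. -/
theorem weak_order_restricts_to_segments (n : ℕ) (u w : List ℕ)
    (hu : IsPermWord n u) (hw : IsPermWord n w)
    (i j : ℕ) (hi : 1 ≤ i) (hij : i ≤ j) (hj : j ≤ n)
    (huw : InvW u ⊆ InvW w) :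
    InvW (stW u i j) ⊆ InvW (stW w i j) := by
  intro ⟨a, b⟩ hab
  have hndu : u.Nodup := hu.nodup_iff.mpr (List.nodup_range' (s := 1) (n := n))
  have hndw : w.Nodup := hw.nodup_iff.mpr (List.nodup_range' (s := 1) (n := n))
  obtain ⟨va, vb, hfa, hfb, h1, h2, h3, h4, hinv⟩ := key u hndu i j hi a b hab
  have hinv' := huw hinv
  obtain ⟨hlt, hma, hmb, hidx⟩ := hinv'
  -- now reassemble
  have hvaf : va ∈ w.filter (fun v => decide (i ≤ v ∧ v ≤ j)) :=
    List.mem_filter.mpr ⟨hma, by simp [h1, h2]⟩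
  have hvbf : vb ∈ w.filter (fun v => decide (i ≤ v ∧ v ≤ j)) :=
    List.mem_filter.mpr ⟨hmb, by simp [h3, h4]⟩
  have hinja : ∀ c ∈ w.filter (fun v => decide (i ≤ v ∧ v ≤ j)),
      c - (i-1) = va - (i-1) → c = va := by
    intro c hc hce
    have := (List.mem_filter.mp hc).2
    simp at this
    omega
  have hinjb : ∀ c ∈ w.filter (fun v => decide (i ≤ v ∧ v ≤ j)),
      c - (i-1) = vb - (i-1) → c = vb := by
    intro c hc hce
    have := (List.mem_filter.mp hc).2
    simp at this
    omega
  have ea : (stW w i j).idxOf a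
      = (w.filter (fun v => decide (i ≤ v ∧ v ≤ j))).idxOf va := by
    rw [← hfa]; exact indexOf_map_inj _ _ _ hinja
  have eb : (stW w i j).idxOf b
      = (w.filter (fun v => decide (i ≤ v ∧ v ≤ j))).idxOf vb := by
    rw [← hfb]; exact indexOf_map_inj _ _ _ hinjb
  refine ⟨hab.1, ?_, ?_, ?_⟩
  · exact List.mem_map.mpr ⟨va, hvaf, hfa⟩
  · exact List.mem_map.mpr ⟨vb, hvbf, hfb⟩
  · rw [ea, eb]
    exact (indexOf_filter_lt _ w hndw vb va hvbf hvaf).mpr hidx
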